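/- arXiv:1501.00589 — 2 statements merged into one kernel-verified Lean document; each statement's English description precedes it below -/
import Mathlib

section
/- Let h be the associative algebra over ℂ generated by elements h_n for n ∈ ℤ \ {0} with relations [h_m, h_n] = m·δ_{m,-n}. Define p^(n) and q^(n) for n ≥ 0 by the generating functions Σ_{n≥0} p^(n) z^n = exp(Σ_{n≥1} (h_{-n}/n) z^n) and Σ_{n≥0} q^(n) z^n = exp(Σ_{n≥1} (h_n/n) z^n) (interpreted in h[[z]]). Then q^(n) p^(m) = Σ_{k≥0} p^(m-k) q^(n-k), where p^(j) = q^(j) = 0 for j < 0. -/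
open Finset PowerSeries

private lemma tri_key {M : Type*} [AddCommMonoid M] (n : ℕ) (G : ℕ → ℕ → M) (i : ℕ) :
    ∑ u ∈ range (n+1-i), G i u
      = ∑ u ∈ range (n+1), if i + u ≤ n then G i u else 0 := by
  rw [Finset.sum_congr rfl (fun u hu => ?_)]
  · exact Finset.sum_subset (Finset.range_subset_range.2 (by omega))
      (fun u _ hu' => by simp only [mem_range] at *; rw [if_neg (by omega)])
  · simp only [mem_range] at hu
    rw [if_pos (by omega)]

private lemma tri_swap {M : Type*} [AddCommMonoid M] (n : ℕ) (F : ℕ → ℕ → M) :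
    ∑ i ∈ range (n+1), ∑ u ∈ range (n+1-i), F i u
      = ∑ u ∈ range (n+1), ∑ i ∈ range (n+1-u), F i u := by
  rw [Finset.sum_congr rfl (fun i _ => tri_key n F i), Finset.sum_comm,
    Finset.sum_congr rfl (fun u _ => tri_key n (fun u i => F i u) u)]
  refine Finset.sum_congr rfl (fun u _ => Finset.sum_congr rfl (fun i _ => ?_))
  rw [Nat.add_comm i u]

private lemma double_count {M : Type*} [AddCommMonoid M] (N : ℕ) (F : ℕ → M)
    (hF : ∀ l, N + 1 < l → F l = 0) :
    ∑ i ∈ range (N+1), ∑ k ∈ range (N+1), F (i + k + 1)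
      = ∑ l ∈ range (N+2), l • F l := by
  have h1 : ∀ i k : ℕ, F (i + k + 1) = if i + k ≤ N then F (i+k+1) else 0 := by
    intro i k
    by_cases hc : i + k ≤ N
    · rw [if_pos hc]
    · rw [if_neg hc, hF _ (by omega)]
  calc ∑ i ∈ range (N+1), ∑ k ∈ range (N+1), F (i + k + 1)
      = ∑ p ∈ (range (N+1)) ×ˢ (range (N+1)),
          (if p.1 + p.2 ≤ N then F (p.1+p.2+1) else 0) := by
        rw [Finset.sum_product]
        simp_rw [← h1]
    _ = ∑ p ∈ ((range (N+1)) ×ˢ (range (N+1))).filter (fun p => p.1 + p.2 ≤ N),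
          F (p.1+p.2+1) := by rw [Finset.sum_filter]
    _ = ∑ p ∈ (range (N+1)).biUnion (fun l => Finset.HasAntidiagonal.antidiagonal l),
          F (p.1+p.2+1) := by
        congr 1
        ext ⟨a, b⟩
        simp only [mem_filter, mem_product, mem_range, mem_biUnion,
          Finset.HasAntidiagonal.mem_antidiagonal]
        constructor
        · rintro ⟨⟨_, _⟩, hab⟩; exact ⟨a+b, by omega, rfl⟩
        · rintro ⟨l, hl, rfl⟩; omega
    _ = ∑ l ∈ range (N+1), ∑ p ∈ Finset.HasAntidiagonal.antidiagonal l, F (p.1+p.2+1) := by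
        rw [Finset.sum_biUnion]
        intro x _ y _ hxy
        simp only [Finset.disjoint_left, Finset.HasAntidiagonal.mem_antidiagonal]
        rintro ⟨a,b⟩ hab hab'
        exact hxy (by omega)
    _ = ∑ l ∈ range (N+1), (l+1) • F (l+1) := by
        apply Finset.sum_congr rfl
        intro l _
        have hcon : ∀ p ∈ Finset.HasAntidiagonal.antidiagonal l, F (p.1+p.2+1) = F (l+1) := by
          intro p hp
          rw [Finset.HasAntidiagonal.mem_antidiagonal] at hp
          rw [hp]
        rw [Finset.sum_congr rfl hcon, Finset.sum_const, Finset.Nat.card_antidiagonal]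
    _ = ∑ l ∈ range (N+2), l • F l := by
        rw [Finset.sum_range_succ' (fun l => l • F l) (N+1)]
        simp

private lemma pow_coeff_zero {A : Type*} [Ring A] (g : PowerSeries A)
    (hg : PowerSeries.coeff (R := A) 0 g = 0) :
    ∀ k n : ℕ, n < k → PowerSeries.coeff (R := A) n (g ^ k) = 0 := by
  intro k
  induction k with
  | zero => intro n hn; omega
  | succ k ih =>
    intro n hn
    rw [pow_succ', PowerSeries.coeff_mul,
      Finset.Nat.sum_antidiagonal_eq_sum_range_succ_mk]
    apply Finset.sum_eq_zero
    intro i hi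
    simp only [mem_range] at hi
    rcases Nat.eq_zero_or_pos i with hi0 | hi0
    · subst hi0; rw [hg, zero_mul]
    · rw [ih (n - i) (by omega), mul_zero]


private lemma pow_coeff_deriv {A : Type*} [Ring A] (g : PowerSeries A)
    (hcomm : ∀ i j : ℕ, Commute (PowerSeries.coeff (R := A) i g) (PowerSeries.coeff (R := A) j g)) :
    ∀ k n : ℕ, n • PowerSeries.coeff (R := A) n (g ^ (k+1))
      = (k+1) • ∑ i ∈ range (n+1),
          (i • PowerSeries.coeff (R := A) i g) * PowerSeries.coeff (R := A) (n - i) (g ^ k) := by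
  intro k
  induction k with
  | zero =>
    intro n
    rw [pow_one, zero_add, one_smul]
    rw [Finset.sum_eq_single n]
    · simp
    · intro i hi hin
      rw [pow_zero, PowerSeries.coeff_one,
        if_neg (by simp only [mem_range] at hi; omega), mul_zero]
    · intro hn; simp at hn
  | succ k ih =>
    intro n
    have e1 : PowerSeries.coeff (R := A) n (g ^ (k+2))
        = ∑ i ∈ range (n+1),
            PowerSeries.coeff (R := A) i g * PowerSeries.coeff (R := A) (n-i) (g ^ (k+1)) := by
      rw [pow_succ' g (k+1), PowerSeries.coeff_mul,
        Finset.Nat.sum_antidiagonal_eq_sum_range_succ_mk]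
    rw [e1, Finset.smul_sum]
    have e2 : ∀ i ∈ range (n+1),
        n • (PowerSeries.coeff (R := A) i g * PowerSeries.coeff (R := A) (n-i) (g ^ (k+1)))
        = (i • PowerSeries.coeff (R := A) i g) * PowerSeries.coeff (R := A) (n-i) (g ^ (k+1))
          + (k+1) • ∑ u ∈ range (n+1-i),
              (u • PowerSeries.coeff (R := A) u g)
                * (PowerSeries.coeff (R := A) i g * PowerSeries.coeff (R := A) (n-i-u) (g ^ k)) := by
      intro i hi
      simp only [mem_range] at hi
      rw [show n • (PowerSeries.coeff (R := A) i g * PowerSeries.coeff (R := A) (n-i) (g ^ (k+1)))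
          = i • (PowerSeries.coeff (R := A) i g * PowerSeries.coeff (R := A) (n-i) (g ^ (k+1)))
            + (n-i) • (PowerSeries.coeff (R := A) i g * PowerSeries.coeff (R := A) (n-i) (g ^ (k+1)))
        from by rw [← add_nsmul]; congr 1; omega]
      congr 1
      · rw [smul_mul_assoc]
      · rw [← mul_smul_comm, ih (n-i), mul_smul_comm]
        congr 1
        rw [Finset.mul_sum, show n - i + 1 = n + 1 - i from by omega]
        refine Finset.sum_congr rfl (fun u hu => ?_)
        have hc : PowerSeries.coeff (R := A) i g * (u • PowerSeries.coeff (R := A) u g)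
            = (u • PowerSeries.coeff (R := A) u g) * PowerSeries.coeff (R := A) i g :=
          ((hcomm i u).smul_right u).eq
        rw [← mul_assoc, hc, mul_assoc]
    rw [Finset.sum_congr rfl e2, Finset.sum_add_distrib, ← Finset.smul_sum,
      tri_swap n (fun i u => (u • PowerSeries.coeff (R := A) u g)
        * (PowerSeries.coeff (R := A) i g * PowerSeries.coeff (R := A) (n-i-u) (g ^ k)))]
    have e3 : ∀ u ∈ range (n+1),
        ∑ i ∈ range (n+1-u), (u • PowerSeries.coeff (R := A) u g)
            * (PowerSeries.coeff (R := A) i g * PowerSeries.coeff (R := A) (n-i-u) (g ^ k))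
        = (u • PowerSeries.coeff (R := A) u g) * PowerSeries.coeff (R := A) (n-u) (g ^ (k+1)) := by
      intro u hu
      simp only [mem_range] at hu
      rw [← Finset.mul_sum]
      congr 1
      rw [pow_succ' g k, PowerSeries.coeff_mul,
        Finset.Nat.sum_antidiagonal_eq_sum_range_succ_mk, Nat.succ_eq_add_one,
        show n - u + 1 = n + 1 - u from by omega]
      refine Finset.sum_congr rfl (fun i hi => ?_)
      simp only [mem_range] at hi
      rw [show n - i - u = n - u - i from by omega]
    rw [Finset.sum_congr rfl e3]
    conv_rhs => rw [succ_nsmul]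
    exact add_comm _ _

private lemma comm_pow {A : Type*} [Ring A] (g : PowerSeries A) (x : A) (j : ℕ)
    (hj : 1 ≤ j)
    (hx : ∀ i : ℕ, x * PowerSeries.coeff (R := A) i g
      = PowerSeries.coeff (R := A) i g * x + (if i = j then 1 else 0)) :
    ∀ k m : ℕ, x * PowerSeries.coeff (R := A) m (g ^ (k+1))
      = PowerSeries.coeff (R := A) m (g ^ (k+1)) * x
        + (k+1) • (if j ≤ m then PowerSeries.coeff (R := A) (m - j) (g ^ k) else 0) := by
  intro k
  induction k with
  | zero =>
    intro m
    rw [pow_one, pow_zero, zero_add, one_smul, hx m]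
    congr 1
    rw [PowerSeries.coeff_one]
    by_cases hc : m = j
    · subst hc
      rw [if_pos rfl, if_pos le_rfl, if_pos (by omega)]
    · rw [if_neg hc]
      by_cases hc2 : j ≤ m
      · rw [if_pos hc2, if_neg (by omega)]
      · rw [if_neg hc2]
  | succ k ih =>
    intro m
    have e1 : PowerSeries.coeff (R := A) m (g ^ (k+2))
        = ∑ i ∈ range (m+1),
            PowerSeries.coeff (R := A) i g * PowerSeries.coeff (R := A) (m-i) (g ^ (k+1)) := by
      rw [pow_succ' g (k+1), PowerSeries.coeff_mul,
        Finset.Nat.sum_antidiagonal_eq_sum_range_succ_mk]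
    rw [e1, Finset.mul_sum]
    have e2 : ∀ i ∈ range (m+1),
        x * (PowerSeries.coeff (R := A) i g * PowerSeries.coeff (R := A) (m-i) (g ^ (k+1)))
        = PowerSeries.coeff (R := A) i g * PowerSeries.coeff (R := A) (m-i) (g ^ (k+1)) * x
          + PowerSeries.coeff (R := A) i g
              * ((k+1) • (if j ≤ m - i then PowerSeries.coeff (R := A) (m-i-j) (g ^ k) else 0))
          + (if i = j then PowerSeries.coeff (R := A) (m-i) (g ^ (k+1)) else 0) := by
      intro i _
      rw [← mul_assoc, hx i, add_mul, mul_assoc, ih (m-i), mul_add, ite_mul, one_mul,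
        zero_mul, ← mul_assoc]
    have e3 : ∑ i ∈ range (m+1), PowerSeries.coeff (R := A) i g
          * ((k+1) • (if j ≤ m - i then PowerSeries.coeff (R := A) (m-i-j) (g ^ k) else 0))
        = (k+1) • (if j ≤ m then PowerSeries.coeff (R := A) (m-j) (g ^ (k+1)) else 0) := by
      by_cases hc : j ≤ m
      · rw [if_pos hc]
        have e4 : PowerSeries.coeff (R := A) (m-j) (g ^ (k+1))
            = ∑ i ∈ range (m-j+1),
                PowerSeries.coeff (R := A) i g * PowerSeries.coeff (R := A) (m-j-i) (g ^ k) := by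
          rw [pow_succ' g k, PowerSeries.coeff_mul,
            Finset.Nat.sum_antidiagonal_eq_sum_range_succ_mk, Nat.succ_eq_add_one]
        rw [e4, Finset.smul_sum,
          ← Finset.sum_subset (Finset.range_subset_range.2 (show m-j+1 ≤ m+1 by omega))
            (fun i hi hi' => ?_)]
        · refine Finset.sum_congr rfl (fun i hi => ?_)
          simp only [mem_range] at hi
          rw [if_pos (by omega), show m - i - j = m - j - i from by omega,
            mul_smul_comm]
        · simp only [mem_range] at hi hi'
          rw [if_neg (by omega), smul_zero, mul_zero]
      · rw [if_neg hc, smul_zero]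
        apply Finset.sum_eq_zero
        intro i _
        rw [if_neg (by omega), smul_zero, mul_zero]
    have edelta : ∑ i ∈ range (m+1),
          (if i = j then PowerSeries.coeff (R := A) (m-i) (g ^ (k+1)) else 0)
        = if j ≤ m then PowerSeries.coeff (R := A) (m-j) (g ^ (k+1)) else 0 := by
      have hcg : ∀ i ∈ range (m+1),
          (if i = j then PowerSeries.coeff (R := A) (m-i) (g ^ (k+1)) else 0)
          = if i = j then PowerSeries.coeff (R := A) (m-j) (g ^ (k+1)) else 0 := by
        intro i _
        by_cases hc : i = j <;> simp [hc]
      rw [Finset.sum_congr rfl hcg]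
      simp only [Finset.sum_ite_eq', mem_range]
      by_cases hc : j ≤ m
      · rw [if_pos (by omega), if_pos hc]
      · rw [if_neg (by omega), if_neg hc]
    rw [Finset.sum_congr rfl e2, Finset.sum_add_distrib, Finset.sum_add_distrib, e3,
      edelta, ← Finset.sum_mul, ← e1]
    conv_rhs => rw [succ_nsmul]
    rw [add_assoc]

private lemma fact_smul {A : Type*} [AddCommMonoid A] [Module ℂ A] (k : ℕ) (x : A) :
    ((Nat.factorial (k+1) : ℂ))⁻¹ • (k+1) • x = ((Nat.factorial k : ℂ))⁻¹ • x := by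
  rw [← Nat.cast_smul_eq_nsmul ℂ (k+1) x, smul_smul]
  congr 1
  have h1 : ((k:ℂ)+1) ≠ 0 := by
    have := Nat.cast_add_one_ne_zero (R := ℂ) k
    simpa using this
  have h2 : ((Nat.factorial k : ℂ)) ≠ 0 := Nat.cast_ne_zero.2 (Nat.factorial_ne_zero k)
  rw [Nat.factorial_succ]
  push_cast
  field_simp

private lemma nsmul_cancel {A : Type*} [AddCommMonoid A] [Module ℂ A] {x y : A}
    (N : ℕ) (hN : N ≠ 0) (hxy : N • x = N • y) : x = y := by
  have h1 : ((N:ℂ)) • x = ((N:ℂ)) • y := by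
    rw [Nat.cast_smul_eq_nsmul, Nat.cast_smul_eq_nsmul, hxy]
  have h2 : ((N:ℂ)) ≠ 0 := Nat.cast_ne_zero.2 hN
  calc x = (N:ℂ)⁻¹ • ((N:ℂ) • x) := by rw [smul_smul, inv_mul_cancel₀ h2, one_smul]
    _ = (N:ℂ)⁻¹ • ((N:ℂ) • y) := by rw [h1]
    _ = y := by rw [smul_smul, inv_mul_cancel₀ h2, one_smul]

private lemma exp_rec {A : Type*} [Ring A] [Algebra ℂ A] (g : PowerSeries A)
    (hg0 : PowerSeries.coeff (R := A) 0 g = 0)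
    (hcomm : ∀ i j : ℕ, Commute (PowerSeries.coeff (R := A) i g) (PowerSeries.coeff (R := A) j g))
    (e : ℕ → A)
    (he : ∀ n : ℕ, e n = ∑ k ∈ range (n+1),
        ((Nat.factorial k : ℂ))⁻¹ • PowerSeries.coeff (R := A) n (g ^ k)) :
    ∀ N : ℕ, N • e N
      = ∑ i ∈ range N, ((i+1) • PowerSeries.coeff (R := A) (i+1) g) * e (N-(i+1)) := by
  intro N
  rw [he N, Finset.smul_sum, Finset.sum_range_succ'
    (fun k => N • (((Nat.factorial k : ℂ))⁻¹ • PowerSeries.coeff (R := A) N (g ^ k))) N]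
  have hlast : N • (((Nat.factorial 0 : ℂ))⁻¹ • PowerSeries.coeff (R := A) N (g^0)) = 0 := by
    rcases N with _ | N
    · rw [zero_smul]
    · rw [pow_zero, PowerSeries.coeff_one, if_neg (Nat.succ_ne_zero N), smul_zero,
        smul_zero]
  rw [hlast, add_zero]
  have step : ∀ k ∈ range N,
      N • (((Nat.factorial (k+1) : ℂ))⁻¹ • PowerSeries.coeff (R := A) N (g ^ (k+1)))
      = ∑ i ∈ range (N+1), ((Nat.factorial k : ℂ))⁻¹
          • ((i • PowerSeries.coeff (R := A) i g) * PowerSeries.coeff (R := A) (N-i) (g^k)) := by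
    intro k _
    rw [smul_comm, pow_coeff_deriv g hcomm k N, fact_smul, Finset.smul_sum]
  rw [Finset.sum_congr rfl step, Finset.sum_comm]
  have step2 : ∀ i ∈ range (N+1),
      ∑ k ∈ range N, ((Nat.factorial k : ℂ))⁻¹
          • ((i • PowerSeries.coeff (R := A) i g) * PowerSeries.coeff (R := A) (N-i) (g^k))
      = (i • PowerSeries.coeff (R := A) i g)
          * ∑ k ∈ range N, ((Nat.factorial k : ℂ))⁻¹ • PowerSeries.coeff (R := A) (N-i) (g^k) := by
    intro i _
    rw [Finset.mul_sum]
    exact Finset.sum_congr rfl (fun k _ => (mul_smul_comm _ _ _).symm)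
  rw [Finset.sum_congr rfl step2, Finset.sum_range_succ'
    (fun i => (i • PowerSeries.coeff (R := A) i g)
      * ∑ k ∈ range N, ((Nat.factorial k : ℂ))⁻¹ • PowerSeries.coeff (R := A) (N-i) (g^k)) N]
  rw [show ((0:ℕ) • PowerSeries.coeff (R := A) 0 g)
      * ∑ k ∈ range N, ((Nat.factorial k : ℂ))⁻¹ • PowerSeries.coeff (R := A) (N-0) (g^k) = 0
    from by rw [zero_smul, zero_mul], add_zero]
  refine Finset.sum_congr rfl (fun i hi => ?_)
  simp only [mem_range] at hi
  congr 1
  rw [he (N-(i+1))]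
  symm
  refine Finset.sum_subset (Finset.range_subset_range.2 (by omega)) (fun k _ hk' => ?_)
  simp only [mem_range] at hk'
  rw [pow_coeff_zero g hg0 k (N-(i+1)) (by omega), smul_zero]




/-- In the Heisenberg algebra `h` with `[h_m, h_n] = m δ_{m,-n}`, the elements
`p⁽ⁿ⁾` and `q⁽ⁿ⁾` defined by the exponential generating series
`Σ p⁽ⁿ⁾ zⁿ = exp(Σ_{n≥1} h_{-n}/n zⁿ)` and `Σ q⁽ⁿ⁾ zⁿ = exp(Σ_{n≥1} h_n/n zⁿ)`
(with `p⁽ʲ⁾ = q⁽ʲ⁾ = 0` for `j < 0`) satisfy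
`q⁽ⁿ⁾ p⁽ᵐ⁾ = Σ_{k≥0} p⁽ᵐ⁻ᵏ⁾ q⁽ⁿ⁻ᵏ⁾`.  Here `expPS` is the exponential of a power
series with vanishing constant term, characterized coefficientwise by
`coeff n (exp f) = Σ_{k=0}^{n} (1/k!) coeff n (f^k)`. -/
theorem trace_heisenberg_stmt0 {A : Type*} [Ring A] [Algebra ℂ A]
    (h : ℤ → A)
    (hrel : ∀ m n : ℤ, m ≠ 0 → n ≠ 0 →
      h m * h n - h n * h m = if m = -n then (m : ℂ) • (1 : A) else 0)
    (p q : ℤ → A)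
    (hp0 : ∀ j : ℤ, j < 0 → p j = 0) (hq0 : ∀ j : ℤ, j < 0 → q j = 0)
    (expPS : PowerSeries A → PowerSeries A)
    (hexp : ∀ (f : PowerSeries A) (n : ℕ),
      PowerSeries.coeff (R := A) n (expPS f)
        = ∑ k ∈ Finset.range (n + 1),
            ((k.factorial : ℂ)⁻¹) • PowerSeries.coeff (R := A) n (f ^ k))
    (hP : ∀ n : ℕ, p n = PowerSeries.coeff (R := A) n
      (expPS (PowerSeries.mk fun j : ℕ =>
        if j = 0 then 0 else ((j : ℂ)⁻¹) • h (-(j : ℤ)))))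
    (hQ : ∀ n : ℕ, q n = PowerSeries.coeff (R := A) n
      (expPS (PowerSeries.mk fun j : ℕ =>
        if j = 0 then 0 else ((j : ℂ)⁻¹) • h (j : ℤ)))) :
    ∀ m n : ℕ, q n * p m
      = ∑ k ∈ Finset.range (min m n + 1), p ((m : ℤ) - k) * q ((n : ℤ) - k) := by
  set F : PowerSeries A := PowerSeries.mk fun j : ℕ =>
    if j = 0 then 0 else ((j : ℂ)⁻¹) • h (j : ℤ) with hFdef
  set G : PowerSeries A := PowerSeries.mk fun j : ℕ =>
    if j = 0 then 0 else ((j : ℂ)⁻¹) • h (-(j : ℤ)) with hGdef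
  have hF0 : PowerSeries.coeff (R := A) 0 F = 0 := by
    rw [hFdef, PowerSeries.coeff_mk, if_pos rfl]
  have hG0 : PowerSeries.coeff (R := A) 0 G = 0 := by
    rw [hGdef, PowerSeries.coeff_mk, if_pos rfl]
  have hcommF : ∀ i j : ℕ, Commute (PowerSeries.coeff (R := A) i F) (PowerSeries.coeff (R := A) j F) := by
    intro i j
    rw [hFdef, PowerSeries.coeff_mk, PowerSeries.coeff_mk]
    rcases eq_or_ne i 0 with hi | hi
    · rw [if_pos hi]; exact Commute.zero_left _
    rcases eq_or_ne j 0 with hj | hj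
    · rw [if_pos hj]; exact Commute.zero_right _
    rw [if_neg hi, if_neg hj]
    have hc : Commute (h (i:ℤ)) (h (j:ℤ)) := by
      have hr := hrel (i:ℤ) (j:ℤ) (by omega) (by omega)
      rw [if_neg (by omega)] at hr
      exact sub_eq_zero.1 hr
    exact (hc.smul_left _).smul_right _
  have hcommG : ∀ i j : ℕ, Commute (PowerSeries.coeff (R := A) i G) (PowerSeries.coeff (R := A) j G) := by
    intro i j
    rw [hGdef, PowerSeries.coeff_mk, PowerSeries.coeff_mk]
    rcases eq_or_ne i 0 with hi | hi
    · rw [if_pos hi]; exact Commute.zero_left _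
    rcases eq_or_ne j 0 with hj | hj
    · rw [if_pos hj]; exact Commute.zero_right _
    rw [if_neg hi, if_neg hj]
    have hc : Commute (h (-(i:ℤ))) (h (-(j:ℤ))) := by
      have hr := hrel (-(i:ℤ)) (-(j:ℤ)) (by omega) (by omega)
      rw [if_neg (by omega)] at hr
      exact sub_eq_zero.1 hr
    exact (hc.smul_left _).smul_right _
  have qcoeff : ∀ n : ℕ, q (n:ℤ) = ∑ k ∈ Finset.range (n+1),
      ((Nat.factorial k : ℂ))⁻¹ • PowerSeries.coeff (R := A) n (F ^ k) := by
    intro n; rw [hQ n, hexp]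
  have pcoeff : ∀ n : ℕ, p (n:ℤ) = ∑ k ∈ Finset.range (n+1),
      ((Nat.factorial k : ℂ))⁻¹ • PowerSeries.coeff (R := A) n (G ^ k) := by
    intro n; rw [hP n, hexp]
  have q0 : q (0:ℤ) = 1 := by
    have := qcoeff 0
    rw [Nat.cast_zero] at this
    rw [this]
    simp [PowerSeries.coeff_zero_eq_constantCoeff]
  -- recursion for q
  have qsum : ∀ N : ℕ, N • q (N:ℤ)
      = ∑ i ∈ Finset.range N, h (((i+1:ℕ)):ℤ) * q ((N:ℤ) - ((i+1:ℕ):ℤ)) := by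
    intro N
    have hrec := exp_rec F hF0 hcommF (fun k => q (k:ℤ)) qcoeff N
    rw [hrec]
    refine Finset.sum_congr rfl (fun i hi => ?_)
    simp only [Finset.mem_range] at hi
    congr 1
    · rw [hFdef, PowerSeries.coeff_mk, if_neg (Nat.succ_ne_zero i),
        ← Nat.cast_smul_eq_nsmul ℂ, smul_smul,
        mul_inv_cancel₀ (Nat.cast_ne_zero.2 (Nat.succ_ne_zero i)), one_smul]
    · congr 1
      omega
  -- commutation of h with p
  have hpc : ∀ j : ℕ, 1 ≤ j → ∀ M : ℤ,
      h (j:ℤ) * p M = p M * h (j:ℤ) + p (M - (j:ℤ)) := by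
    intro j hj M
    rcases lt_or_ge M 0 with hM | hM
    · rw [hp0 M hM, hp0 _ (by omega), mul_zero, zero_mul, add_zero]
    obtain ⟨mm, rfl⟩ := Int.eq_ofNat_of_zero_le hM
    have hx : ∀ i : ℕ, h (j:ℤ) * PowerSeries.coeff (R := A) i G
        = PowerSeries.coeff (R := A) i G * h (j:ℤ) + (if i = j then 1 else 0) := by
      intro i
      rw [hGdef, PowerSeries.coeff_mk]
      rcases eq_or_ne i 0 with hi | hi
      · rw [if_pos hi, if_neg (by omega), mul_zero, zero_mul, add_zero]
      · rw [if_neg hi]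
        have hr := hrel (j:ℤ) (-(i:ℤ)) (by omega) (by omega)
        rcases eq_or_ne i j with hij | hij
        · subst hij
          rw [if_pos (by omega)] at hr
          rw [if_pos rfl, mul_smul_comm, eq_add_of_sub_eq' hr, smul_add, smul_smul]
          congr 1
          · exact (smul_mul_assoc _ _ _).symm
          · push_cast
            rw [inv_mul_cancel₀ (show ((i:ℂ)) ≠ 0 from Nat.cast_ne_zero.2 hi), one_smul]
        · rw [if_neg (by omega)] at hr
          rw [if_neg hij, add_zero, mul_smul_comm, sub_eq_zero.1 hr, smul_mul_assoc]
    have hcomm_k : ∀ k : ℕ, h (j:ℤ) * PowerSeries.coeff (R := A) mm (G^k)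
        = PowerSeries.coeff (R := A) mm (G^k) * h (j:ℤ)
          + k • (if j ≤ mm then PowerSeries.coeff (R := A) (mm-j) (G^(k-1)) else 0) := by
      intro k
      rcases k with _ | k
      · rw [pow_zero, PowerSeries.coeff_one, zero_smul, add_zero]
        by_cases hmm : mm = 0 <;> simp [hmm]
      · simpa using comm_pow G (h (j:ℤ)) j hj hx k mm
    rw [pcoeff mm, Finset.mul_sum, Finset.sum_mul]
    have e1 : ∀ k ∈ Finset.range (mm+1),
        h (j:ℤ) * (((Nat.factorial k : ℂ))⁻¹ • PowerSeries.coeff (R := A) mm (G^k))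
        = ((Nat.factorial k : ℂ))⁻¹ • PowerSeries.coeff (R := A) mm (G^k) * h (j:ℤ)
          + ((Nat.factorial k : ℂ))⁻¹
              • (k • (if j ≤ mm then PowerSeries.coeff (R := A) (mm-j) (G^(k-1)) else 0)) := by
      intro k _
      rw [mul_smul_comm, hcomm_k k, smul_add, smul_mul_assoc]
    rw [Finset.sum_congr rfl e1, Finset.sum_add_distrib]
    congr 1
    -- remaining: ∑ (k!)⁻¹ • k • if ... = p (↑mm - ↑j)
    by_cases hjm : j ≤ mm
    · have e2 : ∀ k ∈ Finset.range (mm+1),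
          ((Nat.factorial k : ℂ))⁻¹
              • (k • (if j ≤ mm then PowerSeries.coeff (R := A) (mm-j) (G^(k-1)) else 0))
          = ((Nat.factorial k : ℂ))⁻¹
              • (k • PowerSeries.coeff (R := A) (mm-j) (G^(k-1))) := by
        intro k _; rw [if_pos hjm]
      rw [Finset.sum_congr rfl e2, Finset.sum_range_succ'
        (fun k => ((Nat.factorial k : ℂ))⁻¹
          • (k • PowerSeries.coeff (R := A) (mm-j) (G^(k-1)))) mm]
      rw [show ((Nat.factorial 0 : ℂ))⁻¹ • ((0:ℕ) • PowerSeries.coeff (R := A) (mm-j) (G^(0-1)))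
          = 0 from by rw [zero_smul, smul_zero], add_zero]
      have e3 : ∀ k ∈ Finset.range mm,
          ((Nat.factorial (k+1) : ℂ))⁻¹
              • ((k+1) • PowerSeries.coeff (R := A) (mm-j) (G^((k+1)-1)))
          = ((Nat.factorial k : ℂ))⁻¹ • PowerSeries.coeff (R := A) (mm-j) (G^k) := by
        intro k _
        rw [Nat.add_sub_cancel, fact_smul]
      rw [Finset.sum_congr rfl e3,
        show ((mm:ℤ)) - ((j:ℤ)) = (((mm-j:ℕ)):ℤ) from by omega, pcoeff (mm-j)]
      symm
      refine Finset.sum_subset (Finset.range_subset_range.2 (by omega)) (fun k _ hk' => ?_)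
      simp only [Finset.mem_range] at hk'
      rw [pow_coeff_zero G hG0 k (mm-j) (by omega), smul_zero]
    · have e2 : ∀ k ∈ Finset.range (mm+1),
          ((Nat.factorial k : ℂ))⁻¹
              • (k • (if j ≤ mm then PowerSeries.coeff (R := A) (mm-j) (G^(k-1)) else 0))
          = 0 := by
        intro k _; rw [if_neg hjm, smul_zero, smul_zero]
      rw [Finset.sum_congr rfl e2, Finset.sum_const, smul_zero,
        hp0 _ (by omega)]
  -- extension of the truncated sum
  have hSext : ∀ (m n N : ℕ), min m n ≤ N →
      ∑ k ∈ Finset.range (N+1), p ((m:ℤ) - k) * q ((n:ℤ) - k)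
      = ∑ k ∈ Finset.range (min m n + 1), p ((m:ℤ) - k) * q ((n:ℤ) - k) := by
    intro m n N hN
    symm
    refine Finset.sum_subset (Finset.range_subset_range.2 (by omega)) (fun k _ hk' => ?_)
    simp only [Finset.mem_range] at hk'
    rcases Nat.lt_or_ge m k with hmk | hmk
    · rw [hp0 _ (by omega), zero_mul]
    · rw [hq0 _ (by omega), mul_zero]
  -- main induction
  suffices key : ∀ n m : ℕ, q (n:ℤ) * p (m:ℤ)
      = ∑ k ∈ Finset.range (min m n + 1), p ((m : ℤ) - k) * q ((n : ℤ) - k) by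
    intro m n; exact key n m
  intro n
  induction n using Nat.strong_induction_on with
  | _ n ih =>
  intro m
  rcases n with _ | N
  · simp only [Nat.cast_zero, Nat.min_zero, zero_add, Finset.sum_range_one,
      Nat.cast_zero, sub_zero, Nat.cast_ofNat]
    rw [q0, one_mul, mul_one]
  · apply nsmul_cancel (N+1) (Nat.succ_ne_zero N)
    rw [← smul_mul_assoc, qsum (N+1), Finset.sum_mul]
    have e1 : ∀ i ∈ Finset.range (N+1),
        (h (((i+1:ℕ)):ℤ) * q ((((N+1:ℕ)):ℤ) - ((i+1:ℕ):ℤ))) * p (m:ℤ)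
        = ∑ k ∈ Finset.range (N+1),
            (p ((m:ℤ) - k) * (h (((i+1:ℕ)):ℤ) * q ((((N-i:ℕ)):ℤ) - k))
              + p ((m:ℤ) - k - ((i+1:ℕ):ℤ)) * q ((((N-i:ℕ)):ℤ) - k)) := by
      intro i hi
      simp only [Finset.mem_range] at hi
      rw [show ((((N+1:ℕ)):ℤ)) - ((i+1:ℕ):ℤ) = (((N-i:ℕ)):ℤ) from by omega, mul_assoc,
        ih (N-i) (by omega) m, ← hSext m (N-i) N (by omega), Finset.mul_sum]
      refine Finset.sum_congr rfl (fun k hk => ?_)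
      rw [← mul_assoc, hpc (i+1) (by omega) ((m:ℤ) - k), add_mul, mul_assoc]
    rw [Finset.sum_congr rfl e1,
      Finset.sum_congr rfl (fun i (_ : i ∈ Finset.range (N+1)) =>
        Finset.sum_add_distrib), Finset.sum_add_distrib]
    have hT1 : ∑ i ∈ Finset.range (N+1), ∑ k ∈ Finset.range (N+1),
          p ((m:ℤ) - k) * (h (((i+1:ℕ)):ℤ) * q ((((N-i:ℕ)):ℤ) - k))
        = ∑ k ∈ Finset.range (N+2),
            (N+1-k) • (p ((m:ℤ) - k) * q ((((N+1:ℕ)):ℤ) - k)) := by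
      rw [Finset.sum_comm]
      conv_rhs => rw [Finset.sum_range_succ, Nat.sub_self, zero_nsmul]
      rw [add_zero]
      refine Finset.sum_congr rfl (fun k hk => ?_)
      simp only [Finset.mem_range] at hk
      have inner : ∑ i ∈ Finset.range (N+1),
          h (((i+1:ℕ)):ℤ) * q ((((N-i:ℕ)):ℤ) - k)
          = (N+1-k) • q ((((N+1-k:ℕ)):ℤ)) := by
        rw [qsum (N+1-k)]
        rw [← Finset.sum_subset (Finset.range_subset_range.2 (show N+1-k ≤ N+1 by omega))
          (fun i hi hi' => ?_)]
        · refine Finset.sum_congr rfl (fun i hi => ?_)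
          simp only [Finset.mem_range] at hi
          congr 2
          omega
        · simp only [Finset.mem_range] at hi hi'
          rw [hq0 _ (by omega), mul_zero]
      rw [← Finset.mul_sum, inner, mul_smul_comm,
        show ((((N+1-k:ℕ)):ℤ)) = (((N+1:ℕ)):ℤ) - (k:ℤ) from by omega]
    have hT2 : ∑ i ∈ Finset.range (N+1), ∑ k ∈ Finset.range (N+1),
          p ((m:ℤ) - k - ((i+1:ℕ):ℤ)) * q ((((N-i:ℕ)):ℤ) - k)
        = ∑ l ∈ Finset.range (N+2),
            l • (p ((m:ℤ) - l) * q ((((N+1:ℕ)):ℤ) - l)) := by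
      have hv : ∀ l : ℕ, N+1 < l →
          p ((m:ℤ) - l) * q ((((N+1:ℕ)):ℤ) - l) = 0 := by
        intro l hl
        rw [hq0 _ (by omega), mul_zero]
      rw [← double_count N (fun l => p ((m:ℤ) - l) * q ((((N+1:ℕ)):ℤ) - l)) hv]
      refine Finset.sum_congr rfl (fun i hi => Finset.sum_congr rfl (fun k hk => ?_))
      simp only [Finset.mem_range] at hi hk
      congr 2
      · omega
      · omega
    rw [hT1, hT2, ← Finset.sum_add_distrib]
    have e4 : ∀ l ∈ Finset.range (N+2),
        (N+1-l) • (p ((m:ℤ) - l) * q ((((N+1:ℕ)):ℤ) - l))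
          + l • (p ((m:ℤ) - l) * q ((((N+1:ℕ)):ℤ) - l))
        = (N+1) • (p ((m:ℤ) - l) * q ((((N+1:ℕ)):ℤ) - l)) := by
      intro l hl
      simp only [Finset.mem_range] at hl
      rw [← add_nsmul, show N+1-l+l = N+1 from by omega]
    rw [Finset.sum_congr rfl e4, ← Finset.smul_sum, hSext m (N+1) (N+1) (by omega)]
end

section
/- The brackets [b_k, b_l] = k·δ_{k,-l}·c, [L_k, L_l] = (k-l)·L_{k+l} + ((k³-k)/12)·δ_{k,-l}·c, [L_l, b_k] = -k·b_{l+k}, [c, −] = 0 define a Lie algebra structure on the ℂ-vector space with basis {c} ∪ {b_l : l ∈ ℤ \ {0}} ∪ {L_k : k ∈ ℤ}; that is, the bracket is antisymmetric and satisfies the Jacobi identity. -/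
/-- The underlying space of the Heisenberg–Virasoro algebra: free ℂ-vector
space on basis `{c} ∪ {b_l : l ≠ 0} ∪ {L_k : k ∈ ℤ}`. -/
abbrev HVBasis : Type := Unit ⊕ ({l : ℤ // l ≠ 0} ⊕ ℤ)

abbrev HVSpace : Type := HVBasis →₀ ℂ

noncomputable def HVc : HVSpace := Finsupp.single (Sum.inl ()) 1

noncomputable def HVb (l : ℤ) (hl : l ≠ 0) : HVSpace :=
  Finsupp.single (Sum.inr (Sum.inl ⟨l, hl⟩)) 1

/-- `b_l` extended by `b_0 = 0`. -/
noncomputable def HVb' (l : ℤ) : HVSpace :=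
  if h : l = 0 then 0 else HVb l h

noncomputable def HVL (k : ℤ) : HVSpace :=
  Finsupp.single (Sum.inr (Sum.inr k)) 1

noncomputable def hvf : HVBasis → HVBasis → HVSpace
  | Sum.inl _, _ => 0
  | Sum.inr _, Sum.inl _ => 0
  | Sum.inr (Sum.inl ⟨k,_⟩), Sum.inr (Sum.inl ⟨l,_⟩) => if k = -l then (k:ℂ) • HVc else 0
  | Sum.inr (Sum.inl ⟨k,_⟩), Sum.inr (Sum.inr l) => (k:ℂ) • HVb' (l+k)
  | Sum.inr (Sum.inr l), Sum.inr (Sum.inl ⟨k,_⟩) => (-(k:ℂ)) • HVb' (l+k)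
  | Sum.inr (Sum.inr k), Sum.inr (Sum.inr l) =>
      ((k:ℂ)-(l:ℂ)) • HVL (k+l) + (if k = -l then (((k:ℂ)^3-(k:ℂ))/12) • HVc else 0)

noncomputable def hvbr : HVSpace →ₗ[ℂ] HVSpace →ₗ[ℂ] HVSpace :=
  Finsupp.linearCombination ℂ (fun i => Finsupp.linearCombination ℂ (hvf i))

lemma hvbr_single (i j : HVBasis) (a b : ℂ) :
    hvbr (Finsupp.single i a) (Finsupp.single j b) = (a*b) • hvf i j := by
  simp only [hvbr, Finsupp.linearCombination_single, LinearMap.smul_apply, smul_smul]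

lemma HVb'_eq (k : ℤ) (hk : k ≠ 0) :
    HVb' k = Finsupp.single (Sum.inr (Sum.inl ⟨k,hk⟩)) (1:ℂ) := by
  simp [HVb', hk, HVb]

lemma br_bb' (k l : ℤ) : hvbr (HVb' k) (HVb' l) = if k = -l then (k:ℂ) • HVc else 0 := by
  by_cases hk : k = 0
  · subst hk
    simp only [HVb', dif_pos rfl, map_zero, LinearMap.zero_apply]
    split_ifs <;> simp
  by_cases hl : l = 0
  · subst hl
    rw [show HVb' 0 = 0 by simp [HVb'], map_zero, if_neg (by omega)]
  rw [HVb'_eq k hk, HVb'_eq l hl, hvbr_single]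
  simp [hvf]

lemma br_b'L (k l : ℤ) : hvbr (HVb' k) (HVL l) = (k:ℂ) • HVb' (l+k) := by
  by_cases hk : k = 0
  · subst hk; simp [HVb']
  rw [HVb'_eq k hk, HVL, hvbr_single]
  simp [hvf]

lemma br_Lb' (l k : ℤ) : hvbr (HVL l) (HVb' k) = (-(k:ℂ)) • HVb' (l+k) := by
  by_cases hk : k = 0
  · subst hk; simp [HVb']
  rw [HVb'_eq k hk, HVL, hvbr_single]
  simp [hvf]

lemma br_LL (k l : ℤ) : hvbr (HVL k) (HVL l)
    = ((k:ℂ) - (l:ℂ)) • HVL (k+l) + (if k = -l then (((k:ℂ)^3-(k:ℂ))/12) • HVc else 0) := by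
  rw [HVL, HVL, hvbr_single]
  simp [hvf]

lemma br_c (x : HVSpace) : hvbr HVc x = 0 := by
  induction x using Finsupp.induction_linear with
  | zero => simp
  | add a b h1 h2 => simp [h1, h2]
  | single j b => rw [HVc, hvbr_single]; simp [hvf]

lemma br_x_c (x : HVSpace) : hvbr x HVc = 0 := by
  induction x using Finsupp.induction_linear with
  | zero => simp
  | add a b h1 h2 => simp [h1, h2]
  | single j b =>
    rw [HVc, hvbr_single]
    rcases j with _ | (⟨k,hk⟩ | k) <;> simp [hvf]

lemma hvf_skew (i j : HVBasis) : hvf i j = - hvf j i := by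
  rcases i with _ | (⟨k,hk⟩ | k) <;> rcases j with _ | (⟨l,hl⟩ | l) <;>
    simp only [hvf, neg_zero]
  · split_ifs with h1 h2 h2
    · subst h1; push_cast; module
    · omega
    · omega
    · simp
  · module
  · module
  · split_ifs with h1 h2 h2
    · subst h1; push_cast; ring_nf; try module
    · omega
    · omega
    · rw [add_comm l k]; module

lemma hvbr_skew (x y : HVSpace) : hvbr x y = - hvbr y x := by
  induction x using Finsupp.induction_linear with
  | zero => simp
  | add a b h1 h2 => simp only [map_add, LinearMap.add_apply, h1, h2]; abel
  | single i a =>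
    induction y using Finsupp.induction_linear with
    | zero => simp
    | add a b h1 h2 => simp only [map_add, LinearMap.add_apply, h1, h2]; abel
    | single j b => rw [hvbr_single, hvbr_single, hvf_skew, mul_comm]; simp

@[simp] lemma br_ite_c (x : HVSpace) (c : Prop) [Decidable c] (α : ℂ) :
    hvbr x (if c then α • HVc else 0) = 0 := by
  split_ifs <;> simp [br_x_c]

@[simp] lemma br_c_ite (y : HVSpace) (c : Prop) [Decidable c] (α : ℂ) :
    hvbr (if c then α • HVc else 0) y = 0 := by
  split_ifs <;> simp [br_c]

lemma jLLL (k l m : ℤ) : hvbr (HVL k) (hvbr (HVL l) (HVL m))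
    = hvbr (hvbr (HVL k) (HVL l)) (HVL m) + hvbr (HVL l) (hvbr (HVL k) (HVL m)) := by
  simp only [br_LL, map_add, map_smul, LinearMap.add_apply, LinearMap.smul_apply,
    br_ite_c, br_c_ite, smul_zero, add_zero, zero_add, smul_add, smul_smul, br_LL]
  split_ifs with h1 h2 h3 h2 h3 h3 h3 <;> try omega
  · subst h1; push_cast; ring_nf; try module
  · push_cast; ring_nf; try module

section
variable (k l m : ℤ)

lemma jbbb : hvbr (HVb' k) (hvbr (HVb' l) (HVb' m))
    = hvbr (hvbr (HVb' k) (HVb' l)) (HVb' m) + hvbr (HVb' l) (hvbr (HVb' k) (HVb' m)) := by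
  simp only [br_bb', br_ite_c, br_c_ite, map_zero, LinearMap.zero_apply, add_zero]

lemma jbbL : hvbr (HVb' k) (hvbr (HVb' l) (HVL m))
    = hvbr (hvbr (HVb' k) (HVb' l)) (HVL m) + hvbr (HVb' l) (hvbr (HVb' k) (HVL m)) := by
  simp only [br_bb', br_b'L, map_smul, LinearMap.smul_apply, br_c_ite, br_bb', zero_add,
    smul_ite, smul_zero, smul_smul]
  split_ifs with h1 h2 <;> try omega
  · subst h1; push_cast; ring_nf; try module
  · rfl

lemma jbLb : hvbr (HVb' k) (hvbr (HVL l) (HVb' m))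
    = hvbr (hvbr (HVb' k) (HVL l)) (HVb' m) + hvbr (HVL l) (hvbr (HVb' k) (HVb' m)) := by
  simp only [br_bb', br_b'L, br_Lb', map_smul, LinearMap.smul_apply, br_ite_c, smul_zero,
    add_zero, smul_ite, smul_smul, br_bb']
  split_ifs with h1 h2 <;> try omega
  · subst h1; push_cast; ring_nf; try module
  · rfl

lemma jLbb : hvbr (HVL k) (hvbr (HVb' l) (HVb' m))
    = hvbr (hvbr (HVL k) (HVb' l)) (HVb' m) + hvbr (HVb' l) (hvbr (HVL k) (HVb' m)) := by
  simp only [br_bb', br_Lb', br_ite_c, map_smul, LinearMap.smul_apply, smul_ite, smul_zero,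
    smul_smul]
  split_ifs with h1 h2 <;> try omega
  · subst h2; push_cast; ring_nf; try module
  · simp

lemma jbLL : hvbr (HVb' k) (hvbr (HVL l) (HVL m))
    = hvbr (hvbr (HVb' k) (HVL l)) (HVL m) + hvbr (HVL l) (hvbr (HVb' k) (HVL m)) := by
  simp only [br_LL, br_b'L, br_Lb', map_add, map_smul, LinearMap.add_apply,
    LinearMap.smul_apply, br_ite_c, smul_zero, add_zero, smul_smul, br_b'L]
  push_cast; ring_nf; try module

lemma jLbL : hvbr (HVL k) (hvbr (HVb' l) (HVL m))
    = hvbr (hvbr (HVL k) (HVb' l)) (HVL m) + hvbr (HVb' l) (hvbr (HVL k) (HVL m)) := by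
  simp only [br_LL, br_b'L, br_Lb', map_add, map_smul, LinearMap.add_apply,
    LinearMap.smul_apply, br_ite_c, smul_zero, add_zero, smul_smul, br_b'L, br_Lb']
  push_cast; ring_nf; try module

lemma jLLb : hvbr (HVL k) (hvbr (HVL l) (HVb' m))
    = hvbr (hvbr (HVL k) (HVL l)) (HVb' m) + hvbr (HVL l) (hvbr (HVL k) (HVb' m)) := by
  simp only [br_LL, br_Lb', map_add, map_smul, LinearMap.add_apply,
    LinearMap.smul_apply, br_c_ite, zero_add, smul_smul, br_Lb']
  push_cast; ring_nf; try module

end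

lemma e_c (u : Unit) : Finsupp.single (Sum.inl u : HVBasis) (1:ℂ) = HVc := rfl
lemma e_b (k : ℤ) (hk : k ≠ 0) :
    Finsupp.single (Sum.inr (Sum.inl ⟨k,hk⟩) : HVBasis) (1:ℂ) = HVb' k := (HVb'_eq k hk).symm
lemma e_L (k : ℤ) : Finsupp.single (Sum.inr (Sum.inr k) : HVBasis) (1:ℂ) = HVL k := rfl

lemma jac_single (i j m : HVBasis) :
    hvbr (Finsupp.single i (1:ℂ)) (hvbr (Finsupp.single j (1:ℂ)) (Finsupp.single m (1:ℂ)))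
      = hvbr (hvbr (Finsupp.single i (1:ℂ)) (Finsupp.single j (1:ℂ))) (Finsupp.single m (1:ℂ))
        + hvbr (Finsupp.single j (1:ℂ)) (hvbr (Finsupp.single i (1:ℂ)) (Finsupp.single m (1:ℂ))) := by
  rcases i with ⟨⟩ | ⟨k,hk⟩ | k <;> rcases j with ⟨⟩ | ⟨l,hl⟩ | l <;>
      rcases m with ⟨⟩ | ⟨n,hn⟩ | n <;>
    try simp only [e_c, e_b, e_L]
  all_goals try (solve
    | simp only [br_c, br_x_c, map_zero, LinearMap.zero_apply, zero_add, add_zero])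
  · exact jbbb k l n
  · exact jbbL k l n
  · exact jbLb k l n
  · exact jbLL k l n
  · exact jLbb k l n
  · exact jLbL k l n
  · exact jLLb k l n
  · exact jLLL k l n

lemma hvbr_jacobi (x y z : HVSpace) :
    hvbr x (hvbr y z) = hvbr (hvbr x y) z + hvbr y (hvbr x z) := by
  induction x using Finsupp.induction_linear with
  | zero => simp
  | add a b h1 h2 => simp only [map_add, LinearMap.add_apply, h1, h2]; abel
  | single i a =>
    induction y using Finsupp.induction_linear with
    | zero => simp
    | add a b h1 h2 => simp only [map_add, LinearMap.add_apply, h1, h2]; abel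
    | single j b =>
      induction z using Finsupp.induction_linear with
      | zero => simp
      | add a b h1 h2 => simp only [map_add, LinearMap.add_apply, h1, h2]; abel
      | single m c =>
        rw [← Finsupp.smul_single_one i a, ← Finsupp.smul_single_one j b,
          ← Finsupp.smul_single_one m c]
        simp only [map_smul, LinearMap.smul_apply, smul_smul]
        rw [jac_single]
        simp only [map_add, smul_add, smul_smul]
        module


/-- The brackets `[b_k, b_l] = k δ_{k,-l} c`,
`[L_k, L_l] = (k-l) L_{k+l} + ((k³-k)/12) δ_{k,-l} c`,
`[L_l, b_k] = -k b_{l+k}`, with `c` central, define a Lie algebra structure on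
the ℂ-vector space with basis `{c} ∪ {b_l : l ≠ 0} ∪ {L_k : k ∈ ℤ}`: there is a
bilinear bracket with those values on basis elements which is antisymmetric and
satisfies the Jacobi identity. -/
theorem trace_heisenberg_stmt9 :
    ∃ br : HVSpace →ₗ[ℂ] HVSpace →ₗ[ℂ] HVSpace,
      (∀ x y : HVSpace, br x y = -br y x)
      ∧ (∀ x y z : HVSpace, br x (br y z) = br (br x y) z + br y (br x z))
      ∧ (∀ x : HVSpace, br HVc x = 0)
      ∧ (∀ (k l : ℤ) (hk : k ≠ 0) (hl : l ≠ 0),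
          br (HVb k hk) (HVb l hl) = if k = -l then (k : ℂ) • HVc else 0)
      ∧ (∀ k l : ℤ, br (HVL k) (HVL l)
          = ((k : ℂ) - l) • HVL (k + l)
            + (if k = -l then (((k : ℂ) ^ 3 - k) / 12) • HVc else 0))
      ∧ (∀ (l k : ℤ) (hk : k ≠ 0),
          br (HVL l) (HVb k hk) = (-(k : ℂ)) • HVb' (l + k)) := by
  refine ⟨hvbr, hvbr_skew, hvbr_jacobi, br_c, fun k l hk hl => ?_, br_LL, fun l k hk => ?_⟩
  · rw [show HVb k hk = HVb' k from (by simp [HVb', hk]),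
        show HVb l hl = HVb' l from (by simp [HVb', hl]), br_bb']
  · rw [show HVb k hk = HVb' k from (by simp [HVb', hk]), br_Lb']
end
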